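/- Let A : Ω_A → L(H) be an observable on a finite-dimensional complex Hilbert space and (M, P, J) a minimal Naimark dilation of A, with least disturbing channel Λ_A(ρ) = ∑_{j∈Ω_A} P(j) J ρ J* P(j). If B ∈ L(M) is positive semidefinite and Λ_A*(B) = 0, then B = 0. -/

import Mathlib

open scoped ComplexOrder

noncomputable section

/-- A positive semidefinite operator on a finite-dimensional complex Hilbert space. -/
def IsPosOp {E : Type*} [NormedAddCommGroup E] [InnerProductSpace ℂ E]
    [FiniteDimensional ℂ E] (T : E →ₗ[ℂ] E) : Prop :=
  LinearMap.adjoint T = T ∧ ∀ x : E, 0 ≤ (inner ℂ (T x) x : ℂ)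

/-- An orthogonal projection: a self-adjoint idempotent operator. -/
def IsOrthoProj {E : Type*} [NormedAddCommGroup E] [InnerProductSpace ℂ E]
    [FiniteDimensional ℂ E] (P : E →ₗ[ℂ] E) : Prop :=
  LinearMap.adjoint P = P ∧ P ∘ₗ P = P

/-- A discrete observable (POVM) with finite outcome set `Ω`. -/
def IsPOVM {E : Type*} [NormedAddCommGroup E] [InnerProductSpace ℂ E]
    [FiniteDimensional ℂ E] {Ω : Type*} [Fintype Ω] (A : Ω → E →ₗ[ℂ] E) : Prop :=
  (∀ j, IsPosOp (A j)) ∧ ∑ j, A j = (1 : E →ₗ[ℂ] E)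

/-- A projection-valued measure (PVM). -/
def IsPVM {E : Type*} [NormedAddCommGroup E] [InnerProductSpace ℂ E]
    [FiniteDimensional ℂ E] {Ω : Type*} [Fintype Ω] (P : Ω → E →ₗ[ℂ] E) : Prop :=
  (∀ j, IsOrthoProj (P j)) ∧ ∑ j, P j = (1 : E →ₗ[ℂ] E)

/-- An isometry between inner product spaces: `J* J = 1`. -/
def IsIsometryOp {E F : Type*} [NormedAddCommGroup E] [InnerProductSpace ℂ E]
    [FiniteDimensional ℂ E] [NormedAddCommGroup F] [InnerProductSpace ℂ F]
    [FiniteDimensional ℂ F] (J : E →ₗ[ℂ] F) : Prop :=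
  LinearMap.adjoint J ∘ₗ J = (1 : E →ₗ[ℂ] E)

/-- `(F, P, J)` is a Naimark dilation of the observable `A`. -/
def IsNaimark {E F : Type*} [NormedAddCommGroup E] [InnerProductSpace ℂ E]
    [FiniteDimensional ℂ E] [NormedAddCommGroup F] [InnerProductSpace ℂ F]
    [FiniteDimensional ℂ F] {Ω : Type*} [Fintype Ω]
    (A : Ω → E →ₗ[ℂ] E) (P : Ω → F →ₗ[ℂ] F) (J : E →ₗ[ℂ] F) : Prop :=
  IsPVM P ∧ IsIsometryOp J ∧ ∀ j, A j = LinearMap.adjoint J ∘ₗ P j ∘ₗ J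

/-- A minimal Naimark dilation: the vectors `P j (J φ)` span the dilation space. -/
def IsMinimalNaimark {E F : Type*} [NormedAddCommGroup E] [InnerProductSpace ℂ E]
    [FiniteDimensional ℂ E] [NormedAddCommGroup F] [InnerProductSpace ℂ F]
    [FiniteDimensional ℂ F] {Ω : Type*} [Fintype Ω]
    (A : Ω → E →ₗ[ℂ] E) (P : Ω → F →ₗ[ℂ] F) (J : E →ₗ[ℂ] F) : Prop :=
  IsNaimark A P J ∧ Submodule.span ℂ {x : F | ∃ j φ, x = P j (J φ)} = ⊤

/-- The sandwich map `σ ↦ U ∘ σ ∘ V` as a linear map on operators. -/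
def sandwich {E F : Type*} [NormedAddCommGroup E] [InnerProductSpace ℂ E]
    [NormedAddCommGroup F] [InnerProductSpace ℂ F]
    (U : E →ₗ[ℂ] F) (V : F →ₗ[ℂ] E) : (E →ₗ[ℂ] E) →ₗ[ℂ] (F →ₗ[ℂ] F) where
  toFun σ := U ∘ₗ σ ∘ₗ V
  map_add' σ τ := by
    ext x; simp [LinearMap.add_comp, LinearMap.comp_add]
  map_smul' c σ := by
    ext x; simp

/-- The least disturbing channel `ρ ↦ ∑ j, P j J ρ J* P j` associated with
a Naimark dilation `(F, P, J)`. -/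
def leastDisturbing {E F : Type*} [NormedAddCommGroup E] [InnerProductSpace ℂ E]
    [FiniteDimensional ℂ E] [NormedAddCommGroup F] [InnerProductSpace ℂ F]
    [FiniteDimensional ℂ F] {Ω : Type*} [Fintype Ω]
    (P : Ω → F →ₗ[ℂ] F) (J : E →ₗ[ℂ] F) : (E →ₗ[ℂ] E) →ₗ[ℂ] (F →ₗ[ℂ] F) :=
  ∑ j, sandwich (P j ∘ₗ J) (LinearMap.adjoint J ∘ₗ P j)

/-- The Lüders channel `σ ↦ ∑ j, P j σ P j` of a PVM `P`. -/
def ludersChannel {F : Type*} [NormedAddCommGroup F] [InnerProductSpace ℂ F]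
    {Ω : Type*} [Fintype Ω] (P : Ω → F →ₗ[ℂ] F) : (F →ₗ[ℂ] F) →ₗ[ℂ] (F →ₗ[ℂ] F) :=
  ∑ j, sandwich (P j) (P j)

/-- Complete positivity of a map on operators, expressed through the existence of
a Kraus decomposition (equivalent to complete positivity in finite dimension). -/
def IsCPMap {E F : Type*} [NormedAddCommGroup E] [InnerProductSpace ℂ E]
    [FiniteDimensional ℂ E] [NormedAddCommGroup F] [InnerProductSpace ℂ F]
    [FiniteDimensional ℂ F] (Λ : (E →ₗ[ℂ] E) →ₗ[ℂ] (F →ₗ[ℂ] F)) : Prop :=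
  ∃ (n : ℕ) (V : Fin n → (E →ₗ[ℂ] F)),
    ∀ ρ, Λ ρ = ∑ i, V i ∘ₗ ρ ∘ₗ LinearMap.adjoint (V i)

/-- A quantum channel: a completely positive trace-preserving linear map. -/
def IsChannel {E F : Type*} [NormedAddCommGroup E] [InnerProductSpace ℂ E]
    [FiniteDimensional ℂ E] [NormedAddCommGroup F] [InnerProductSpace ℂ F]
    [FiniteDimensional ℂ F] (Λ : (E →ₗ[ℂ] E) →ₗ[ℂ] (F →ₗ[ℂ] F)) : Prop :=
  IsCPMap Λ ∧ ∀ ρ, LinearMap.trace ℂ F (Λ ρ) = LinearMap.trace ℂ E ρ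

/-- `Λd` is the Heisenberg dual of `Λ`: `tr[Λ(ρ) B] = tr[ρ Λd(B)]` for all `ρ, B`. -/
def IsHeisenbergDual {E F : Type*} [NormedAddCommGroup E] [InnerProductSpace ℂ E]
    [FiniteDimensional ℂ E] [NormedAddCommGroup F] [InnerProductSpace ℂ F]
    [FiniteDimensional ℂ F] (Λ : (E →ₗ[ℂ] E) →ₗ[ℂ] (F →ₗ[ℂ] F))
    (Λd : (F →ₗ[ℂ] F) →ₗ[ℂ] (E →ₗ[ℂ] E)) : Prop :=
  ∀ ρ B, LinearMap.trace ℂ F (Λ ρ ∘ₗ B) = LinearMap.trace ℂ E (ρ ∘ₗ Λd B)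

/-- Channel post-processing: `Λ₀ ⪯ Λ` iff `Λ₀ = Γ ∘ Λ` for some channel `Γ`. -/
def ChanPP {E F G : Type*} [NormedAddCommGroup E] [InnerProductSpace ℂ E]
    [FiniteDimensional ℂ E] [NormedAddCommGroup F] [InnerProductSpace ℂ F]
    [FiniteDimensional ℂ F] [NormedAddCommGroup G] [InnerProductSpace ℂ G]
    [FiniteDimensional ℂ G]
    (Λ₀ : (E →ₗ[ℂ] E) →ₗ[ℂ] (G →ₗ[ℂ] G)) (Λ : (E →ₗ[ℂ] E) →ₗ[ℂ] (F →ₗ[ℂ] F)) : Prop :=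
  ∃ Γ : (F →ₗ[ℂ] F) →ₗ[ℂ] (G →ₗ[ℂ] G), IsChannel Γ ∧ Λ₀ = Γ ∘ₗ Λ

/-- Post-processing equivalence of channels. -/
def ChanEquiv {E F G : Type*} [NormedAddCommGroup E] [InnerProductSpace ℂ E]
    [FiniteDimensional ℂ E] [NormedAddCommGroup F] [InnerProductSpace ℂ F]
    [FiniteDimensional ℂ F] [NormedAddCommGroup G] [InnerProductSpace ℂ G]
    [FiniteDimensional ℂ G]
    (Λ₀ : (E →ₗ[ℂ] E) →ₗ[ℂ] (G →ₗ[ℂ] G)) (Λ : (E →ₗ[ℂ] E) →ₗ[ℂ] (F →ₗ[ℂ] F)) : Prop :=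
  ChanPP Λ₀ Λ ∧ ChanPP Λ Λ₀

/-- Observable post-processing: `B ⪯ A` via a stochastic matrix `p`. -/
def ObsPP {E : Type*} [NormedAddCommGroup E] [InnerProductSpace ℂ E]
    [FiniteDimensional ℂ E] {Ω₁ Ω₂ : Type*} [Fintype Ω₁] [Fintype Ω₂]
    (B : Ω₂ → E →ₗ[ℂ] E) (A : Ω₁ → E →ₗ[ℂ] E) : Prop :=
  ∃ p : Ω₂ → Ω₁ → ℝ, (∀ k j, 0 ≤ p k j) ∧ (∀ j, ∑ k, p k j = 1) ∧
    ∀ k, B k = ∑ j, (p k j : ℂ) • A j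

/-- Post-processing equivalence of observables. -/
def ObsEquiv {E : Type*} [NormedAddCommGroup E] [InnerProductSpace ℂ E]
    [FiniteDimensional ℂ E] {Ω₁ Ω₂ : Type*} [Fintype Ω₁] [Fintype Ω₂]
    (B : Ω₂ → E →ₗ[ℂ] E) (A : Ω₁ → E →ₗ[ℂ] E) : Prop :=
  ObsPP B A ∧ ObsPP A B

/-- `B` is a relabeling of `A` (along some function `f` on outcomes). -/
def IsRelabeling {E : Type*} [NormedAddCommGroup E] [InnerProductSpace ℂ E]
    [FiniteDimensional ℂ E] {Ω₁ Ω₂ : Type*} [Fintype Ω₁] [Fintype Ω₂] [DecidableEq Ω₂]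
    (B : Ω₂ → E →ₗ[ℂ] E) (A : Ω₁ → E →ₗ[ℂ] E) : Prop :=
  ∃ f : Ω₁ → Ω₂, ∀ k, B k = ∑ j ∈ Finset.univ.filter (fun j => f j = k), A j

/-- A minimally sufficient observable: every observable post-processing
equivalent to it is a refinement of it (i.e. it is a relabeling of every such observable). -/
def MinSufficient {E : Type*} [NormedAddCommGroup E] [InnerProductSpace ℂ E]
    [FiniteDimensional ℂ E] {Ω : Type*} [Fintype Ω] [DecidableEq Ω]
    (A : Ω → E →ₗ[ℂ] E) : Prop :=
  ∀ (Ω' : Type) (_ : Fintype Ω') (B : Ω' → E →ₗ[ℂ] E),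
    IsPOVM B → ObsEquiv B A → IsRelabeling A B

/-- Compatibility of an observable `A` and a channel `Λ`: there is an instrument
with the outcome statistics of `A` whose total channel is `Λ`. -/
def CompatObsChan {E F : Type*} [NormedAddCommGroup E] [InnerProductSpace ℂ E]
    [FiniteDimensional ℂ E] [NormedAddCommGroup F] [InnerProductSpace ℂ F]
    [FiniteDimensional ℂ F] {Ω : Type*} [Fintype Ω]
    (A : Ω → E →ₗ[ℂ] E) (Λ : (E →ₗ[ℂ] E) →ₗ[ℂ] (F →ₗ[ℂ] F)) : Prop :=
  ∃ I : Ω → ((E →ₗ[ℂ] E) →ₗ[ℂ] (F →ₗ[ℂ] F)),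
    (∀ j, IsCPMap (I j)) ∧
    (∀ j ρ, LinearMap.trace ℂ F (I j ρ) = LinearMap.trace ℂ E (ρ ∘ₗ A j)) ∧
    ∑ j, I j = Λ

/-- Joint measurability (compatibility) of two observables. -/
def JointlyMeasurable {E : Type*} [NormedAddCommGroup E] [InnerProductSpace ℂ E]
    [FiniteDimensional ℂ E] {Ω₁ Ω₂ : Type*} [Fintype Ω₁] [Fintype Ω₂]
    (A : Ω₁ → E →ₗ[ℂ] E) (B : Ω₂ → E →ₗ[ℂ] E) : Prop :=
  ∃ G : Ω₁ × Ω₂ → E →ₗ[ℂ] E, IsPOVM G ∧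
    (∀ j, A j = ∑ k, G (j, k)) ∧ (∀ k, B k = ∑ j, G (j, k))

/-- An extreme observable: an extreme point of the convex set of observables
with the given outcome set. -/
def IsExtremeObs {E : Type*} [NormedAddCommGroup E] [InnerProductSpace ℂ E]
    [FiniteDimensional ℂ E] {Ω : Type*} [Fintype Ω] (A : Ω → E →ₗ[ℂ] E) : Prop :=
  IsPOVM A ∧ ∀ (B₁ B₂ : Ω → E →ₗ[ℂ] E) (t : ℝ), IsPOVM B₁ → IsPOVM B₂ →
    0 < t → t < 1 → (∀ j, A j = (t : ℂ) • B₁ j + ((1 - t : ℝ) : ℂ) • B₂ j) →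
    (B₁ = A ∧ B₂ = A)

/-- `|x⟩⟨y|` : the rank-one operator `z ↦ ⟨y, z⟩ x`. -/
def outer {E : Type*} [NormedAddCommGroup E] [InnerProductSpace ℂ E] (x y : E) :
    E →ₗ[ℂ] E where
  toFun z := (inner ℂ y z : ℂ) • x
  map_add' z w := by simp [inner_add_right, add_smul]
  map_smul' c z := by simp [inner_smul_right, smul_smul]

/-- Loewner order on operators: `S ≤ T` iff `T - S` is positive semidefinite. -/
def LoewnerLE {E : Type*} [NormedAddCommGroup E] [InnerProductSpace ℂ E]
    [FiniteDimensional ℂ E] (S T : E →ₗ[ℂ] E) : Prop :=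
  IsPosOp (T - S)

/-- Compression of an operator `T` on `F` to a subspace `S`: `P_S ∘ T ∘ incl_S`. -/
def compressTo {F : Type*} [NormedAddCommGroup F] [InnerProductSpace ℂ F]
    [FiniteDimensional ℂ F] (S : Submodule ℂ F) (T : F →ₗ[ℂ] F) : ↥S →ₗ[ℂ] ↥S :=
  have := FiniteDimensional.complete ℂ ↥S
  S.orthogonalProjectionOnto.toLinearMap ∘ₗ T ∘ₗ S.subtype

end

lemma inner_posOp_eq_zero' {E : Type*} [NormedAddCommGroup E] [InnerProductSpace ℂ E]
    [FiniteDimensional ℂ E] {B : E →ₗ[ℂ] E} (hB : IsPosOp B) {v : E}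
    (hv : (inner ℂ (B v) v : ℂ) = 0) : B v = 0 := by
  have hsym : ∀ x y : E, (inner ℂ (B x) y : ℂ) = inner ℂ x (B y) := by
    intro x y
    conv_lhs => rw [← hB.1]
    exact LinearMap.adjoint_inner_left B y x
  have hre : ∀ w : E, (inner ℂ (B v) w : ℂ).re = 0 := by
    intro w
    set c : ℂ := inner ℂ (B v) w with hc
    have hd := hB.2 w
    have hs : 0 ≤ (inner ℂ (B w) w : ℂ).re := by
      simpa using (Complex.le_def.mp hd).1
    have him : (inner ℂ (B w) w : ℂ).im = 0 := by
      simpa using (Complex.le_def.mp hd).2.symm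
    set s : ℝ := (inner ℂ (B w) w : ℂ).re with hsdef
    have key : ∀ t : ℝ, 0 ≤ 2 * t * c.re + t ^ 2 * s := by
      intro t
      have h := hB.2 (v + (t : ℂ) • w)
      have h1 : (inner ℂ (B w) v : ℂ) = (starRingEnd ℂ) c := by
        rw [hsym w v, hc, ← inner_conj_symm]
      have hcalc : (inner ℂ (B (v + (t : ℂ) • w)) (v + (t : ℂ) • w) : ℂ).re
          = 2 * t * c.re + t ^ 2 * s := by
        rw [map_add, map_smul, inner_add_left, inner_add_right, inner_add_right,
          inner_smul_left, inner_smul_right, inner_smul_left, inner_smul_right, hv, h1, ← hc]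
        simp [Complex.add_re, Complex.mul_re, Complex.conj_re, Complex.conj_im,
          Complex.ofReal_re, Complex.ofReal_im, him, ← hsdef]
        ring
      have h2 : (0:ℝ) ≤ (inner ℂ (B (v + (t : ℂ) • w)) (v + (t : ℂ) • w) : ℂ).re := by
        simpa using (Complex.le_def.mp h).1
      linarith [hcalc ▸ h2]
    by_contra hne
    have hs1 : (0:ℝ) < s + 1 := by linarith
    have ht := key (-(c.re) / (s + 1))
    have h2 : 2 * (-(c.re) / (s + 1)) * c.re + (-(c.re) / (s + 1)) ^ 2 * s
        = -(c.re ^ 2 * (s + 2)) / (s + 1) ^ 2 := by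
      field_simp
      ring
    rw [h2] at ht
    have hp2 : (0:ℝ) < (s + 1) ^ 2 := by positivity
    rw [le_div_iff₀ hp2] at ht
    have hcp : (0:ℝ) < c.re ^ 2 := by positivity
    nlinarith [mul_pos hcp hs1]
  have hall : ∀ w : E, (inner ℂ (B v) w : ℂ) = 0 := by
    intro w
    have h1 := hre w
    have h2 := hre (Complex.I • w)
    rw [inner_smul_right] at h2
    apply Complex.ext
    · exact h1
    · simpa [Complex.mul_re, Complex.I_re, Complex.I_im] using h2
  have := hall (B v)
  rwa [inner_self_eq_zero] at this

lemma trace_outer_h {E : Type*} [NormedAddCommGroup E] [InnerProductSpace ℂ E]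
    [FiniteDimensional ℂ E] (x y : E) :
    LinearMap.trace ℂ E (outer x y) = inner ℂ y x := by
  let b := stdOrthonormalBasis ℂ E
  rw [LinearMap.trace_eq_matrix_trace ℂ b.toBasis, Matrix.trace]
  simp only [Matrix.diag, LinearMap.toMatrix_apply, OrthonormalBasis.coe_toBasis,
    OrthonormalBasis.coe_toBasis_repr_apply, OrthonormalBasis.repr_apply_apply]
  simp only [outer, LinearMap.coe_mk, AddHom.coe_mk, inner_smul_right]
  exact b.sum_inner_mul_inner y x

lemma comp_outer_h {E : Type*} [NormedAddCommGroup E] [InnerProductSpace ℂ E]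
    (T : E →ₗ[ℂ] E) (x y : E) : T ∘ₗ outer x y = outer (T x) y := by
  ext z; simp [outer]

lemma outer_comp_h {E : Type*} [NormedAddCommGroup E] [InnerProductSpace ℂ E]
    [FiniteDimensional ℂ E] (T : E →ₗ[ℂ] E) (x y : E) :
    outer x y ∘ₗ T = outer x (LinearMap.adjoint T y) := by
  ext z; simp [outer, LinearMap.adjoint_inner_left]


lemma outer_conj_h {E F : Type*} [NormedAddCommGroup E] [InnerProductSpace ℂ E]
    [FiniteDimensional ℂ E] [NormedAddCommGroup F] [InnerProductSpace ℂ F]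
    [FiniteDimensional ℂ F] (K : E →ₗ[ℂ] F) (L : F →ₗ[ℂ] E) (x y : E) :
    K ∘ₗ outer x y ∘ₗ L = outer (K x) (LinearMap.adjoint L y) := by
  ext z; simp [outer, LinearMap.adjoint_inner_left]

lemma sum_comp_h {ι E : Type*} [Fintype ι] [NormedAddCommGroup E] [InnerProductSpace ℂ E]
    (f : ι → E →ₗ[ℂ] E) (g : E →ₗ[ℂ] E) : (∑ j, f j) ∘ₗ g = ∑ j, f j ∘ₗ g := by
  ext x; simp

/-- If `(M, P, J)` is a minimal Naimark dilation of an observable `A` and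
`Λ_A` is the associated least disturbing channel, then for positive semidefinite
`B ∈ L(M)`, `Λ_A*(B) = 0` implies `B = 0`. -/
theorem stmt_4 {H M : Type*}
    [NormedAddCommGroup H] [InnerProductSpace ℂ H] [FiniteDimensional ℂ H]
    [NormedAddCommGroup M] [InnerProductSpace ℂ M] [FiniteDimensional ℂ M]
    {Ω : Type*} [Fintype Ω]
    (A : Ω → H →ₗ[ℂ] H) (P : Ω → M →ₗ[ℂ] M) (J : H →ₗ[ℂ] M)
    (hA : IsPOVM A) (hdil : IsMinimalNaimark A P J)
    (Λd : (M →ₗ[ℂ] M) →ₗ[ℂ] (H →ₗ[ℂ] H))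
    (hΛd : IsHeisenbergDual (leastDisturbing P J) Λd)
    (B : M →ₗ[ℂ] M) (hB : IsPosOp B) (h0 : Λd B = 0) :
    B = 0 := by
  obtain ⟨⟨hPVM, hIso, hNai⟩, hspan⟩ := hdil
  have key : ∀ (φ : H) (j : Ω), B (P j (J φ)) = 0 := by
    intro φ
    have htr := hΛd (outer φ φ) B
    rw [h0] at htr
    have hzero : LinearMap.trace ℂ H ((outer φ φ : H →ₗ[ℂ] H) ∘ₗ (0 : H →ₗ[ℂ] H)) = 0 := by
      simp
    rw [hzero] at htr
    have hLHS : LinearMap.trace ℂ M (leastDisturbing P J (outer φ φ) ∘ₗ B)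
        = ∑ j, (inner ℂ (B (P j (J φ))) (P j (J φ)) : ℂ) := by
      rw [leastDisturbing, LinearMap.sum_apply, sum_comp_h, map_sum]
      refine Finset.sum_congr rfl fun j _ => ?_
      have hsand : sandwich (P j ∘ₗ J) (LinearMap.adjoint J ∘ₗ P j) (outer φ φ)
          = (P j ∘ₗ J) ∘ₗ outer φ φ ∘ₗ (LinearMap.adjoint J ∘ₗ P j) := rfl
      rw [hsand]
      have hassoc : ((P j ∘ₗ J) ∘ₗ outer φ φ ∘ₗ (LinearMap.adjoint J ∘ₗ P j)) ∘ₗ B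
          = (P j ∘ₗ J) ∘ₗ (outer φ φ ∘ₗ ((LinearMap.adjoint J ∘ₗ P j) ∘ₗ B)) := by
        simp only [LinearMap.comp_assoc]
      rw [hassoc, outer_conj_h]
      have hadj : LinearMap.adjoint ((LinearMap.adjoint J ∘ₗ P j) ∘ₗ B) φ
          = B (P j (J φ)) := by
        rw [LinearMap.adjoint_comp, LinearMap.adjoint_comp, hB.1, (hPVM.1 j).1,
          LinearMap.adjoint_adjoint]
        rfl
      rw [hadj, trace_outer_h]
      rfl
    have hsum : ∑ j, (inner ℂ (B (P j (J φ))) (P j (J φ)) : ℂ) = 0 := by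
      rw [← hLHS, htr]
    have hnn : ∀ j ∈ Finset.univ, (0:ℂ) ≤ inner ℂ (B (P j (J φ))) (P j (J φ)) :=
      fun j _ => hB.2 _
    intro j
    have hj := (Finset.sum_eq_zero_iff_of_nonneg hnn).mp hsum j (Finset.mem_univ j)
    exact inner_posOp_eq_zero' hB hj
  have hle : Submodule.span ℂ {x : M | ∃ j φ, x = P j (J φ)} ≤ LinearMap.ker B := by
    rw [Submodule.span_le]
    rintro x ⟨j, φ, rfl⟩
    exact key φ j
  rw [hspan] at hle
  ext x
  simpa using hle (Submodule.mem_top (x := x))
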